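/- arXiv:2302.14248 — 4 statements merged into one kernel-verified Lean document; each statement's English description precedes it below -/
import Mathlib

section
/- Let (Ω, F, (F_t)_{t∈ℕ}, P) be a filtered probability space and (X_t)_{t≥1} an adapted real-valued process. Fix v ∈ ℝ and λ ∈ ℝ. Let θ_s = E[1_{X_s ≤ v} | F_{s−1}], S_t = Σ_{s≤t} (1_{X_s ≤ v} − θ_s), and h(λ, z) = (1−z)e^{−λz} + z e^{λ(1−z)}. Then the process E_t(λ) = exp(λ S_t − Σ_{s≤t} log h(λ, θ_s)), with E_0(λ) = 1, is a nonnegative martingale with respect to (F_t), and in particular E[E_t(λ)] = 1 for all t. -/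
open MeasureTheory Filter Set

noncomputable def bernoulliMGF (lam z : ℝ) : ℝ :=
  (1 - z) * Real.exp (-lam * z) + z * Real.exp (lam * (1 - z))

lemma bmgf_measurable (lam : ℝ) : Measurable (bernoulliMGF lam) := by
  unfold bernoulliMGF; fun_prop

lemma bmgf_bounds (lam : ℝ) {z : ℝ} (h0 : 0 ≤ z) (h1 : z ≤ 1) :
    Real.exp (-|lam|) ≤ bernoulliMGF lam z ∧ bernoulliMGF lam z ≤ Real.exp |lam| := by
  have ha : Real.exp (-|lam|) ≤ Real.exp (-lam * z) ∧ Real.exp (-lam * z) ≤ Real.exp |lam| := by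
    constructor <;> apply Real.exp_le_exp.2 <;> [skip; skip] <;>
      cases abs_cases lam with
      | inl h => nlinarith [h.1, h.2]
      | inr h => nlinarith [h.1, h.2]
  have hb : Real.exp (-|lam|) ≤ Real.exp (lam * (1 - z)) ∧ Real.exp (lam * (1 - z)) ≤ Real.exp |lam| := by
    constructor <;> apply Real.exp_le_exp.2 <;>
      cases abs_cases lam with
      | inl h => nlinarith [h.1, h.2]
      | inr h => nlinarith [h.1, h.2]
  unfold bernoulliMGF
  constructor <;> nlinarith [ha.1, ha.2, hb.1, hb.2, Real.exp_pos (-|lam|), Real.exp_pos |lam|]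

lemma bmgf_pos (lam : ℝ) {z : ℝ} (h0 : 0 ≤ z) (h1 : z ≤ 1) : 0 < bernoulliMGF lam z :=
  lt_of_lt_of_le (Real.exp_pos _) (bmgf_bounds lam h0 h1).1

lemma bmgf_log_abs (lam : ℝ) {z : ℝ} (h0 : 0 ≤ z) (h1 : z ≤ 1) :
    |Real.log (bernoulliMGF lam z)| ≤ |lam| := by
  obtain ⟨hl, hu⟩ := bmgf_bounds lam h0 h1
  rw [abs_le]
  constructor
  · calc -|lam| = Real.log (Real.exp (-|lam|)) := (Real.log_exp _).symm
      _ ≤ _ := Real.log_le_log (Real.exp_pos _) hl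
  · calc Real.log (bernoulliMGF lam z) ≤ Real.log (Real.exp |lam|) :=
        Real.log_le_log (bmgf_pos lam h0 h1) hu
      _ = |lam| := Real.log_exp _

lemma bmgf_identity (lam z : ℝ) :
    Real.exp (-lam * z) * (1 + z * (Real.exp lam - 1)) = bernoulliMGF lam z := by
  unfold bernoulliMGF
  rw [show lam * (1 - z) = lam + -lam * z by ring, Real.exp_add]
  ring

/-- the test martingale, equation (3) of the paper.  For an adapted
real-valued process `X`, fixed `v lam : ℝ`, `θ s = E[1_{X s ≤ v} | ℱ (s-1)]` and
`S t = ∑_{s ≤ t} (1_{X s ≤ v} - θ s)`, the process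
`E t = exp (lam * S t - ∑_{s ≤ t} log (h lam (θ s)))` (with `E 0 = 1`) is a nonnegative
martingale with respect to `ℱ`; in particular `E[E t] = 1` for all `t`. -/
theorem test_martingale {Ω : Type*} {m0 : MeasurableSpace Ω} (μ : Measure Ω)
    [IsProbabilityMeasure μ] (ℱ : Filtration ℕ m0) (X : ℕ → Ω → ℝ) (hX : Adapted ℱ X)
    (v lam : ℝ)
    (θ : ℕ → Ω → ℝ)
    (hθ : ∀ s, θ s = μ[Set.indicator {ω' | X s ω' ≤ v} (fun _ => (1 : ℝ)) | ℱ (s - 1)])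
    (E : ℕ → Ω → ℝ)
    (hE : ∀ t ω, E t ω =
      Real.exp (lam * (∑ s ∈ Finset.Icc 1 t,
          (Set.indicator {ω' | X s ω' ≤ v} (fun _ => (1 : ℝ)) ω - θ s ω)) -
        ∑ s ∈ Finset.Icc 1 t, Real.log (bernoulliMGF lam (θ s ω)))) :
    Martingale E ℱ μ ∧ (∀ t ω, 0 ≤ E t ω) ∧ (∀ ω, E 0 ω = 1) ∧
      (∀ t, ∫ ω, E t ω ∂μ = 1) := by
  set I : ℕ → Ω → ℝ := fun s => Set.indicator {ω' | X s ω' ≤ v} (fun _ => (1 : ℝ)) with hIdef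
  have hE' : ∀ t ω, E t ω = Real.exp (lam * (∑ s ∈ Finset.Icc 1 t, (I s ω - θ s ω)) -
      ∑ s ∈ Finset.Icc 1 t, Real.log (bernoulliMGF lam (θ s ω))) := hE
  have hθ' : ∀ s, θ s = μ[I s | ℱ (s - 1)] := hθ
  -- basic facts about the indicator
  have hIset : ∀ s, MeasurableSet[ℱ s] {ω' | X s ω' ≤ v} := fun s =>
    measurableSet_le (hX s) measurable_const
  have hImeas : ∀ s, Measurable[ℱ s] (I s) := fun s =>
    (measurable_const.indicator (hIset s))
  have hI01 : ∀ s ω, I s ω = 0 ∨ I s ω = 1 := by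
    intro s ω
    by_cases h : ω ∈ {ω' | X s ω' ≤ v}
    · right; simp [hIdef, Set.indicator_of_mem h]
    · left; simp [hIdef, Set.indicator_of_notMem h]
  have hIbd : ∀ s ω, 0 ≤ I s ω ∧ I s ω ≤ 1 := by
    intro s ω; rcases hI01 s ω with h | h <;> rw [h] <;> norm_num
  have hIint : ∀ s, Integrable (I s) μ :=
    fun s => (integrable_const (1 : ℝ)).indicator (ℱ.le s _ (hIset s))
  -- facts about θ
  have hθsm : ∀ s, StronglyMeasurable[ℱ (s - 1)] (θ s) := by
    intro s; rw [hθ' s]; exact stronglyMeasurable_condExp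
  have hθ01 : ∀ s, ∀ᵐ ω ∂μ, 0 ≤ θ s ω ∧ θ s ω ≤ 1 := by
    intro s
    have h1 : 0 ≤ᵐ[μ] θ s := by
      rw [hθ' s]
      exact condExp_nonneg (Eventually.of_forall fun ω => (hIbd s ω).1)
    have h2 : θ s ≤ᵐ[μ] fun _ => (1 : ℝ) := by
      rw [hθ' s]
      refine EventuallyLE.trans (condExp_mono (hIint s) (integrable_const 1)
        (Eventually.of_forall fun ω => (hIbd s ω).2)) ?_
      rw [condExp_const (ℱ.le (s - 1)) (1 : ℝ)]
    filter_upwards [h1, h2] with ω hω1 hω2 using ⟨hω1, hω2⟩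
  have hθae : ∀ᵐ ω ∂μ, ∀ s, 0 ≤ θ s ω ∧ θ s ω ≤ 1 := ae_all_iff.2 hθ01
  -- measurability of E t
  have hEmeas : ∀ t, StronglyMeasurable[ℱ t] (E t) := by
    intro t
    have hfun : E t = fun ω => Real.exp (lam * (∑ s ∈ Finset.Icc 1 t, (I s ω - θ s ω)) -
        ∑ s ∈ Finset.Icc 1 t, Real.log (bernoulliMGF lam (θ s ω))) := funext (hE' t)
    rw [hfun]
    have hθm : ∀ s ∈ Finset.Icc 1 t, Measurable[ℱ t] (θ s) := fun s hs =>
      ((hθsm s).measurable).mono (ℱ.mono (le_trans (Nat.sub_le s 1) (Finset.mem_Icc.1 hs).2)) le_rfl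
    have hIm : ∀ s ∈ Finset.Icc 1 t, Measurable[ℱ t] (I s) := fun s hs =>
      (hImeas s).mono (ℱ.mono (Finset.mem_Icc.1 hs).2) le_rfl
    have h1 : Measurable[ℱ t] fun ω => ∑ s ∈ Finset.Icc 1 t, (I s ω - θ s ω) :=
      Finset.measurable_sum _ fun s hs => (hIm s hs).sub (hθm s hs)
    have h2 : Measurable[ℱ t] fun ω => ∑ s ∈ Finset.Icc 1 t, Real.log (bernoulliMGF lam (θ s ω)) :=
      Finset.measurable_sum _ fun s hs =>
        Real.measurable_log.comp ((bmgf_measurable lam).comp (hθm s hs))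
    exact (Real.measurable_exp.comp ((measurable_const.mul h1).sub h2)).stronglyMeasurable
  -- a.e. bound on E t
  have hEbound : ∀ t, ∀ᵐ ω ∂μ, ‖E t ω‖ ≤ Real.exp (2 * |lam| * t) := by
    intro t
    filter_upwards [hθae] with ω hω
    have habs : ∀ s ∈ Finset.Icc 1 t, |I s ω - θ s ω| ≤ 1 := by
      intro s _
      have h1 := hIbd s ω; have h2 := hω s
      rw [abs_le]; constructor <;> linarith [h1.1, h1.2, h2.1, h2.2]
    have hsum1 : |∑ s ∈ Finset.Icc 1 t, (I s ω - θ s ω)| ≤ t := by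
      calc |∑ s ∈ Finset.Icc 1 t, (I s ω - θ s ω)| ≤ ∑ s ∈ Finset.Icc 1 t, |I s ω - θ s ω| :=
            Finset.abs_sum_le_sum_abs _ _
        _ ≤ ∑ s ∈ Finset.Icc 1 t, (1 : ℝ) := Finset.sum_le_sum habs
        _ = t := by simp
    have hsum2 : |∑ s ∈ Finset.Icc 1 t, Real.log (bernoulliMGF lam (θ s ω))| ≤ |lam| * t := by
      calc |∑ s ∈ Finset.Icc 1 t, Real.log (bernoulliMGF lam (θ s ω))|
          ≤ ∑ s ∈ Finset.Icc 1 t, |Real.log (bernoulliMGF lam (θ s ω))| :=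
            Finset.abs_sum_le_sum_abs _ _
        _ ≤ ∑ s ∈ Finset.Icc 1 t, |lam| :=
            Finset.sum_le_sum fun s _ => bmgf_log_abs lam (hω s).1 (hω s).2
        _ = |lam| * t := by simp [mul_comm]
    rw [hE' t ω, Real.norm_eq_abs, Real.abs_exp, Real.exp_le_exp]
    have h3 : |lam * ∑ s ∈ Finset.Icc 1 t, (I s ω - θ s ω)| ≤ |lam| * t := by
      rw [abs_mul]
      exact mul_le_mul_of_nonneg_left hsum1 (abs_nonneg lam)
    linarith [(abs_le.1 h3).2, (abs_le.1 hsum2).1]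
  -- integrability
  have hEint : ∀ t, Integrable (E t) μ := fun t =>
    Integrable.mono' (integrable_const (Real.exp (2 * |lam| * t)))
      ((hEmeas t).mono (ℱ.le t)).aestronglyMeasurable (hEbound t)
  -- one step martingale property
  have hstep : ∀ t, E t =ᵐ[μ] μ[E (t + 1) | ℱ t] := by
    intro t
    set r : Ω → ℝ := fun ω => Real.exp (lam * (I (t + 1) ω - θ (t + 1) ω) -
      Real.log (bernoulliMGF lam (θ (t + 1) ω))) with hrdef
    have hdecomp : E (t + 1) = E t * r := by
      funext ω
      simp only [Pi.mul_apply, hrdef]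
      rw [hE' (t + 1) ω, hE' t ω, ← Real.exp_add]
      congr 1
      rw [Finset.sum_Icc_succ_top (by omega : 1 ≤ t + 1),
        Finset.sum_Icc_succ_top (by omega : 1 ≤ t + 1)]
      ring
    have hθm : Measurable[ℱ t] (θ (t + 1)) := ((hθsm (t + 1)).measurable : Measurable[ℱ t] (θ (t + 1)))
    set G : Ω → ℝ := fun ω => Real.exp (-lam * θ (t + 1) ω -
      Real.log (bernoulliMGF lam (θ (t + 1) ω))) with hGdef
    set J : Ω → ℝ := fun ω => 1 + (Real.exp lam - 1) * I (t + 1) ω with hJdef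
    have hrGJ : r = G * J := by
      funext ω
      simp only [Pi.mul_apply, hrdef, hGdef, hJdef]
      rcases hI01 (t + 1) ω with h | h
      · rw [h, mul_zero, add_zero, mul_one]; congr 1; ring
      · rw [h, mul_one, show (1 : ℝ) + (Real.exp lam - 1) = Real.exp lam by ring,
          mul_comm, ← Real.exp_add]
        congr 1; ring
    have hGsm : StronglyMeasurable[ℱ t] G := by
      have : Measurable[ℱ t] G := by
        rw [hGdef]; exact Real.measurable_exp.comp ((measurable_const.mul hθm).sub
          (Real.measurable_log.comp ((bmgf_measurable lam).comp hθm)))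
      exact this.stronglyMeasurable
    have hJint : Integrable J μ :=
      (integrable_const (1 : ℝ)).add ((hIint (t + 1)).const_mul (Real.exp lam - 1))
    have hrmeas : AEStronglyMeasurable r μ := by
      have : Measurable r := Real.measurable_exp.comp
        (((measurable_const.mul (((hImeas (t + 1)).mono (ℱ.le (t + 1)) le_rfl).sub
          (hθm.mono (ℱ.le t) le_rfl))).sub
          (Real.measurable_log.comp ((bmgf_measurable lam).comp (hθm.mono (ℱ.le t) le_rfl)))))
      exact this.aestronglyMeasurable
    have hrbound : ∀ᵐ ω ∂μ, ‖r ω‖ ≤ Real.exp (2 * |lam|) := by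
      filter_upwards [hθ01 (t + 1)] with ω hω
      rw [hrdef, Real.norm_eq_abs, Real.abs_exp, Real.exp_le_exp]
      have h1 := hIbd (t + 1) ω
      have h2 : |lam * (I (t + 1) ω - θ (t + 1) ω)| ≤ |lam| := by
        rw [abs_mul]
        have : |I (t + 1) ω - θ (t + 1) ω| ≤ 1 := by
          rw [abs_le]; constructor <;> linarith [h1.1, h1.2, hω.1, hω.2]
        nlinarith [abs_nonneg lam]
      have h3 := bmgf_log_abs lam hω.1 hω.2
      linarith [(abs_le.1 h2).2, (abs_le.1 h3).1]
    have hrint : Integrable r μ :=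
      Integrable.mono' (integrable_const _) hrmeas hrbound
    -- conditional expectation of J
    have hJc : μ[J | ℱ t] =ᵐ[μ] fun ω => 1 + (Real.exp lam - 1) * θ (t + 1) ω := by
      have hJeq : J = (fun _ => (1 : ℝ)) + (Real.exp lam - 1) • I (t + 1) := by
        funext ω; simp [hJdef, smul_eq_mul]
      rw [hJeq]
      refine (condExp_add (integrable_const 1)
        ((hIint (t + 1)).smul (Real.exp lam - 1)) (ℱ t)).trans ?_
      have h1 : μ[(fun _ : Ω => (1 : ℝ)) | ℱ t] = fun _ => (1 : ℝ) :=
        condExp_const (ℱ.le t) 1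
      have h2 : μ[(Real.exp lam - 1) • I (t + 1) | ℱ t] =ᵐ[μ]
          (Real.exp lam - 1) • θ (t + 1) := by
        refine (condExp_smul (Real.exp lam - 1) (I (t + 1)) (ℱ t)).trans ?_
        have h3 := hθ' (t + 1)
        rw [Nat.add_sub_cancel] at h3
        rw [h3]
      rw [h1]
      filter_upwards [h2] with ω hω
      simp only [Pi.add_apply, Pi.smul_apply, smul_eq_mul] at *
      rw [hω]
    -- conditional expectation of r
    have hrc : μ[r | ℱ t] =ᵐ[μ] fun _ => (1 : ℝ) := by
      rw [hrGJ]
      refine (condExp_mul_of_stronglyMeasurable_left hGsm (by rw [← hrGJ]; exact hrint) hJint).trans ?_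
      filter_upwards [hJc, hθ01 (t + 1)] with ω hω hθω
      simp only [Pi.mul_apply]
      rw [hω]
      have hpos := bmgf_pos lam hθω.1 hθω.2
      simp only [hGdef]
      rw [Real.exp_sub, Real.exp_log hpos, div_mul_eq_mul_div,
        mul_comm (Real.exp lam - 1) (θ (t + 1) ω), bmgf_identity,
        div_self (ne_of_gt hpos)]
    -- conclude
    have h := condExp_mul_of_stronglyMeasurable_left (hEmeas t)
      (by rw [← hdecomp]; exact hEint (t + 1)) hrint
    rw [hdecomp]
    refine (EventuallyEq.symm ?_)
    refine h.trans ?_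
    filter_upwards [hrc] with ω hω
    simp only [Pi.mul_apply]
    rw [hω, mul_one]
  have hmart : Martingale E ℱ μ := martingale_nat hEmeas hEint hstep
  have hnonneg : ∀ t ω, 0 ≤ E t ω := fun t ω => by rw [hE']; exact (Real.exp_pos _).le
  have hE0 : ∀ ω, E 0 ω = 1 := by
    intro ω; rw [hE']; simp
  refine ⟨hmart, hnonneg, hE0, fun t => ?_⟩
  have h0 : μ[E t | ℱ 0] =ᵐ[μ] E 0 := hmart.condExp_ae_eq (Nat.zero_le t)
  calc ∫ ω, E t ω ∂μ = ∫ ω, (μ[E t | ℱ 0]) ω ∂μ := (integral_condExp (ℱ.le 0)).symm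
    _ = ∫ ω, E 0 ω ∂μ := integral_congr_ae h0
    _ = 1 := by simp [hE0]
end

section
/- Let λ ∈ ℝ, t ≥ 1, and θ_1, ..., θ_t ∈ [0,1] with q = (1/t) Σ_{s≤t} θ_s. Then Σ_{s≤t} log h(λ, θ_s) ≤ t · log h(λ, q), where h(λ, z) = (1−z)e^{−λz} + z e^{λ(1−z)}. Consequently, exp(λ S − Σ_{s≤t} log h(λ, θ_s)) ≥ exp(λ S − t · log h(λ, q)) for every real S. -/
lemma bernoulliMGF_eq (lam z : ℝ) :
    bernoulliMGF lam z = Real.exp (-lam * z) * (1 + z * (Real.exp lam - 1)) := by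
  unfold bernoulliMGF
  have : lam * (1 - z) = lam + -lam * z := by ring
  rw [this, Real.exp_add]
  ring

lemma log_bernoulliMGF (lam z : ℝ) (hz : z ∈ Set.Icc (0 : ℝ) 1) :
    Real.log (bernoulliMGF lam z) = -lam * z + Real.log (1 + z * (Real.exp lam - 1)) := by
  have hpos : 0 < 1 + z * (Real.exp lam - 1) := by
    have : 1 + z * (Real.exp lam - 1) = (1 - z) + z * Real.exp lam := by ring
    rw [this]
    rcases eq_or_lt_of_le hz.1 with h | h
    · simp [← h]
    · have := Real.exp_pos lam
      nlinarith [hz.2]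
  rw [bernoulliMGF_eq, Real.log_mul (Real.exp_ne_zero _) (ne_of_gt hpos), Real.log_exp]

/-- equation (binmartlb) of the paper.  For `lam : ℝ`, `t ≥ 1` and
`θ 1, …, θ t ∈ [0, 1]` with average `q = (1/t) ∑_{s ≤ t} θ s`, one has
`∑_{s ≤ t} log (h lam (θ s)) ≤ t * log (h lam q)`; consequently
`exp (lam * S - ∑_{s ≤ t} log (h lam (θ s))) ≤ exp (lam * S - t * log (h lam q))`
for every real `S`. -/
theorem log_mgf_sum_le (lam : ℝ) (t : ℕ) (ht : 1 ≤ t) (θ : ℕ → ℝ)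
    (hθ : ∀ s ∈ Finset.Icc 1 t, θ s ∈ Set.Icc (0 : ℝ) 1)
    (q : ℝ) (hq : q = (t : ℝ)⁻¹ * ∑ s ∈ Finset.Icc 1 t, θ s) :
    (∑ s ∈ Finset.Icc 1 t, Real.log (bernoulliMGF lam (θ s)) ≤
        (t : ℝ) * Real.log (bernoulliMGF lam q)) ∧
      ∀ S : ℝ,
        Real.exp (lam * S - (t : ℝ) * Real.log (bernoulliMGF lam q)) ≤
          Real.exp (lam * S - ∑ s ∈ Finset.Icc 1 t, Real.log (bernoulliMGF lam (θ s))) := by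
  have htpos : (0 : ℝ) < t := by exact_mod_cast Nat.lt_of_lt_of_le Nat.zero_lt_one ht
  have hcard : (Finset.Icc 1 t).card = t := by
    rw [Nat.card_Icc]; omega
  -- q ∈ [0,1]
  have hsum_le : ∑ s ∈ Finset.Icc 1 t, θ s ≤ ∑ s ∈ Finset.Icc 1 t, (1 : ℝ) :=
    Finset.sum_le_sum fun s hs => (hθ s hs).2
  have hsum_ge : (0 : ℝ) ≤ ∑ s ∈ Finset.Icc 1 t, θ s :=
    Finset.sum_nonneg fun s hs => (hθ s hs).1
  have hq01 : q ∈ Set.Icc (0 : ℝ) 1 := by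
    constructor
    · rw [hq]; positivity
    · rw [hq]
      rw [Finset.sum_const, hcard] at hsum_le
      rw [inv_mul_le_iff₀ htpos]
      simpa using hsum_le
  -- key positivity
  have hpos : ∀ z ∈ Set.Icc (0 : ℝ) 1, (0 : ℝ) < 1 + z * (Real.exp lam - 1) := by
    intro z hz
    have : 1 + z * (Real.exp lam - 1) = (1 - z) + z * Real.exp lam := by ring
    rw [this]
    rcases eq_or_lt_of_le hz.1 with h | h
    · simp [← h]
    · have := Real.exp_pos lam
      nlinarith [hz.2]
  -- Jensen
  have hjensen : ∑ s ∈ Finset.Icc 1 t, ((t : ℝ)⁻¹) • Real.log (1 + θ s * (Real.exp lam - 1)) ≤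
      Real.log (∑ s ∈ Finset.Icc 1 t, ((t : ℝ)⁻¹) • (1 + θ s * (Real.exp lam - 1))) := by
    apply strictConcaveOn_log_Ioi.concaveOn.le_map_sum
    · intro i _; positivity
    · rw [Finset.sum_const, hcard, nsmul_eq_mul, mul_inv_cancel₀ (ne_of_gt htpos)]
    · intro i hi; exact hpos _ (hθ i hi)
  have hsum_eq : ∑ s ∈ Finset.Icc 1 t, ((t : ℝ)⁻¹) • (1 + θ s * (Real.exp lam - 1)) =
      1 + q * (Real.exp lam - 1) := by
    simp only [smul_eq_mul]
    rw [← Finset.mul_sum, Finset.sum_add_distrib, Finset.sum_const, hcard, nsmul_eq_mul,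
      mul_one, ← Finset.sum_mul, hq]
    field_simp
  have main : ∑ s ∈ Finset.Icc 1 t, Real.log (bernoulliMGF lam (θ s)) ≤
      (t : ℝ) * Real.log (bernoulliMGF lam q) := by
    have hrw : ∀ s ∈ Finset.Icc 1 t, Real.log (bernoulliMGF lam (θ s)) =
        -lam * θ s + Real.log (1 + θ s * (Real.exp lam - 1)) := fun s hs =>
      log_bernoulliMGF lam (θ s) (hθ s hs)
    rw [Finset.sum_congr rfl hrw, Finset.sum_add_distrib, log_bernoulliMGF lam q hq01]
    have h1 : ∑ s ∈ Finset.Icc 1 t, -lam * θ s = (t : ℝ) * (-lam * q) := by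
      rw [hq, ← Finset.mul_sum]; field_simp
    have h2 : ∑ s ∈ Finset.Icc 1 t, Real.log (1 + θ s * (Real.exp lam - 1)) ≤
        (t : ℝ) * Real.log (1 + q * (Real.exp lam - 1)) := by
      have hj := hjensen
      rw [hsum_eq] at hj
      simp only [smul_eq_mul] at hj
      rw [← Finset.mul_sum] at hj
      have := mul_le_mul_of_nonneg_left hj htpos.le
      rw [← mul_assoc, mul_inv_cancel₀ (ne_of_gt htpos), one_mul] at this
      exact this
    rw [h1, mul_add]
    linarith
  refine ⟨main, fun S => Real.exp_le_exp.mpr (by linarith)⟩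
end

section
/- (Kearns–Saul inequality, used to establish the sub-Gaussian property in Theorem 3.2.) For every p ∈ (0,1) and every λ ∈ ℝ, (1−p)e^{−λp} + p e^{λ(1−p)} ≤ exp(λ² K(p) / 2), where K(p) = (2p−1) / (2 log(p/(1−p))) for p ≠ 1/2 and K(1/2) = 1/4. -/
open Real Set

/-- The Kearns–Saul variance factor `K p = (2p - 1) / (2 log (p / (1 - p)))` for `p ≠ 1/2`,
extended by continuity to `K (1/2) = 1/4`. -/
noncomputable def kearnsSaul (p : ℝ) : ℝ :=
  if p = 1 / 2 then 1 / 4 else (2 * p - 1) / (2 * Real.log (p / (1 - p)))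

/-- Monotone comparison from a pointwise derivative. -/
lemma ks_mono {F F' : ℝ → ℝ} (h : ∀ x, HasDerivAt F (F' x) x)
    {a b : ℝ} (hab : a ≤ b) (hd : ∀ x ∈ Set.Ioo a b, 0 ≤ F' x) : F a ≤ F b := by
  have hm : MonotoneOn F (Set.Icc a b) := by
    apply monotoneOn_of_deriv_nonneg (convex_Icc a b)
    · exact fun x _ => (h x).continuousAt.continuousWithinAt
    · intro x hx
      exact (h x).differentiableAt.differentiableWithinAt
    · intro x hx
      rw [interior_Icc] at hx
      rw [(h x).deriv]
      exact hd x hx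
  exact hm (Set.left_mem_Icc.2 hab) (Set.right_mem_Icc.2 hab) hab

lemma ks_anti {F F' : ℝ → ℝ} (h : ∀ x, HasDerivAt F (F' x) x)
    {a b : ℝ} (hab : a ≤ b) (hd : ∀ x ∈ Set.Ioo a b, F' x ≤ 0) : F b ≤ F a := by
  have := ks_mono (F := fun x => -F x) (F' := fun x => -F' x)
    (fun x => (h x).neg) hab (fun x hx => neg_nonneg.2 (hd x hx))
  simp only [neg_le_neg_iff] at this
  exact this

lemma ks_sinh_le (x : ℝ) (hx : 0 ≤ x) : Real.sinh x ≤ x * Real.cosh x := by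
  have h : ∀ t : ℝ, HasDerivAt (fun s => s * Real.cosh s - Real.sinh s) (t * Real.sinh t) t := by
    intro t
    have h1 := ((hasDerivAt_id t).mul (Real.hasDerivAt_cosh t)).sub (Real.hasDerivAt_sinh t)
    refine h1.congr_deriv ?_
    simp [id]
  have := ks_mono h hx (fun t ht => mul_nonneg ht.1.le (Real.sinh_pos_iff.2 ht.1).le)
  simpa using this
/-- `u` is the logistic-type function `p e^y / (q + p e^y)`. -/
noncomputable def ksU (p y : ℝ) : ℝ := p * Real.exp y / ((1 - p) + p * Real.exp y)

/-- `F = K y²/2 - (log(q + p e^y) - p y)`, the quantity to be shown nonnegative. -/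
noncomputable def ksF (p K y : ℝ) : ℝ :=
  K * y ^ 2 / 2 - (Real.log ((1 - p) + p * Real.exp y) - p * y)

/-- `G = F'`. -/
noncomputable def ksG (p K y : ℝ) : ℝ := K * y - (ksU p y - p)

lemma ksD_pos {p : ℝ} (hp0 : 0 < p) (hp1 : p < 1) (y : ℝ) :
    0 < (1 - p) + p * Real.exp y :=
  add_pos (by linarith) (mul_pos hp0 (Real.exp_pos y))

lemma ksU_pos {p : ℝ} (hp0 : 0 < p) (hp1 : p < 1) (y : ℝ) : 0 < ksU p y :=
  div_pos (mul_pos hp0 (Real.exp_pos y)) (ksD_pos hp0 hp1 y)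

lemma ksU_lt_one {p : ℝ} (hp0 : 0 < p) (hp1 : p < 1) (y : ℝ) : ksU p y < 1 :=
  (div_lt_one (ksD_pos hp0 hp1 y)).2 (by linarith)

lemma ksU_mono {p : ℝ} (hp0 : 0 < p) (hp1 : p < 1) {a b : ℝ} (hab : a ≤ b) :
    ksU p a ≤ ksU p b := by
  rw [ksU, ksU, div_le_div_iff₀ (ksD_pos hp0 hp1 a) (ksD_pos hp0 hp1 b)]
  have h := Real.exp_le_exp.2 hab
  nlinarith [mul_le_mul_of_nonneg_left h (le_of_lt (mul_pos hp0 (show (0:ℝ) < 1 - p by linarith)))]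

lemma ksU_zero {p : ℝ} (hp0 : 0 < p) : ksU p 0 = p := by
  rw [ksU, Real.exp_zero]
  field_simp
  ring

lemma ksF_zero (p K : ℝ) : ksF p K 0 = 0 := by
  simp [ksF, Real.exp_zero]

lemma ksF_deriv {p : ℝ} (hp0 : 0 < p) (hp1 : p < 1) (K y : ℝ) :
    HasDerivAt (ksF p K) (ksG p K y) y := by
  have h1 : HasDerivAt (fun t : ℝ => (1 - p) + p * Real.exp t) (p * Real.exp y) y :=
    ((Real.hasDerivAt_exp y).const_mul p).const_add (1 - p)
  have h2 : HasDerivAt (fun t : ℝ => Real.log ((1 - p) + p * Real.exp t)) (ksU p y) y :=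
    h1.log (ksD_pos hp0 hp1 y).ne'
  have h3 : HasDerivAt (fun t : ℝ => K * t ^ 2 / 2) (K * y) y := by
    have := ((hasDerivAt_pow 2 y).const_mul K).div_const 2
    refine this.congr_deriv ?_
    simp
    ring
  have h4 : HasDerivAt (fun t : ℝ => p * t) p y := by
    simpa using (hasDerivAt_id y).const_mul p
  exact h3.sub (h2.sub h4)

lemma ksG_deriv {p : ℝ} (hp0 : 0 < p) (hp1 : p < 1) (K y : ℝ) :
    HasDerivAt (ksG p K) (K - ksU p y * (1 - ksU p y)) y := by
  have h1 : HasDerivAt (fun t : ℝ => (1 - p) + p * Real.exp t) (p * Real.exp y) y :=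
    ((Real.hasDerivAt_exp y).const_mul p).const_add (1 - p)
  have hN : HasDerivAt (fun t : ℝ => p * Real.exp t) (p * Real.exp y) y :=
    (Real.hasDerivAt_exp y).const_mul p
  have hu : HasDerivAt (fun t : ℝ => ksU p t) (ksU p y * (1 - ksU p y)) y := by
    have h2 := hN.div h1 (ksD_pos hp0 hp1 y).ne'
    refine h2.congr_deriv ?_
    rw [ksU]
    have hD := (ksD_pos hp0 hp1 y).ne'
    field_simp
  have hK : HasDerivAt (fun t : ℝ => K * t) K y := by
    simpa using (hasDerivAt_id y).const_mul K
  have := hK.sub (hu.sub_const p)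
  exact this
lemma ks_key {p K : ℝ} (hp0 : 0 < p) (hp2 : p ≤ 1 / 2)
    (hK1 : p * (1 - p) ≤ K) (hK2 : K ≤ 1 / 4)
    (hK3 : K * (2 * Real.log ((1 - p) / p)) = 1 - 2 * p)
    (x : ℝ) : 0 ≤ ksF p K x := by
  have hp1 : p < 1 := by linarith
  have hq0 : 0 < 1 - p := by linarith
  obtain ⟨d, hd0, hd2⟩ : ∃ d : ℝ, 0 ≤ d ∧ d ^ 2 = 1 / 4 - K :=
    ⟨Real.sqrt (1 / 4 - K), Real.sqrt_nonneg _, Real.sq_sqrt (by linarith)⟩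
  have hdle : d ≤ 1 / 2 - p := by
    nlinarith [hd2, hK1, hd0, sq_nonneg (d - (1 / 2 - p))]
  obtain ⟨um, up, hum_def, hup_def⟩ : ∃ um up : ℝ, um = 1 / 2 - d ∧ up = 1 / 2 + d :=
    ⟨_, _, rfl, rfl⟩
  have hum_p : p ≤ um := by rw [hum_def]; linarith
  have hup_q : up ≤ 1 - p := by rw [hup_def]; linarith
  have hum0 : 0 < um := lt_of_lt_of_le hp0 hum_p
  have hup0 : 0 < up := by rw [hup_def]; linarith
  have hmle : um ≤ up := by rw [hum_def, hup_def]; linarith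
  have hsum : um + up = 1 := by rw [hum_def, hup_def]; ring
  have hprod : um * up = K := by rw [hum_def, hup_def]; nlinarith [hd2]
  -- second derivative sign identity
  have hsign : ∀ y : ℝ, K - ksU p y * (1 - ksU p y) = (ksU p y - um) * (ksU p y - up) := by
    intro y
    linear_combination (ksU p y) * hsum - hprod
  -- special points
  set L : ℝ := Real.log ((1 - p) / p) with hL_def
  have hr1 : 1 ≤ (1 - p) / p := (one_le_div hp0).2 (by linarith)
  have hL0 : 0 ≤ L := Real.log_nonneg hr1
  set lam0 : ℝ := 2 * L with hlam0_def
  set lam1 : ℝ := Real.log ((1 - p) * um / (p * up)) with hlam1_def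
  set lam2 : ℝ := Real.log ((1 - p) * up / (p * um)) with hlam2_def
  have hc1 : 0 < (1 - p) * um / (p * up) := by positivity
  have hc2 : 0 < (1 - p) * up / (p * um) := by positivity
  have hkey : p * up ≤ (1 - p) * um := by nlinarith
  -- values of u at the special points
  have hu1 : ksU p lam1 = um := by
    have hden : (0:ℝ) < 1 - p + p * ((1 - p) * um / (p * up)) := by positivity
    rw [ksU, hlam1_def, Real.exp_log hc1, div_eq_iff hden.ne']
    field_simp
    linear_combination (-1) * hsum
  have hu2 : ksU p lam2 = up := by
    have hden : (0:ℝ) < 1 - p + p * ((1 - p) * up / (p * um)) := by positivity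
    rw [ksU, hlam2_def, Real.exp_log hc2, div_eq_iff hden.ne']
    field_simp
    linear_combination (-1) * hsum
  have hexp0 : Real.exp lam0 = ((1 - p) / p) ^ 2 := by
    rw [hlam0_def, two_mul, Real.exp_add, hL_def, Real.exp_log (by positivity), sq]
  have hD0 : (1 - p) + p * Real.exp lam0 = (1 - p) / p := by
    rw [hexp0]
    field_simp
    ring
  have hu0 : ksU p lam0 = 1 - p := by
    rw [ksU, hD0, hexp0]
    field_simp
  -- ordering of special points
  have h1nn : 0 ≤ lam1 := Real.log_nonneg ((one_le_div (by positivity)).2 hkey)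
  have hqp : (0:ℝ) ≤ (1 - p) / p := by positivity
  have h12 : lam1 ≤ lam2 := by
    apply Real.log_le_log hc1
    have h1 : um / up ≤ 1 := (div_le_one hup0).2 hmle
    have h2 : (1:ℝ) ≤ up / um := (one_le_div hum0).2 hmle
    calc (1 - p) * um / (p * up) = ((1 - p) / p) * (um / up) := by ring
      _ ≤ ((1 - p) / p) * (up / um) := mul_le_mul_of_nonneg_left (h1.trans h2) hqp
      _ = (1 - p) * up / (p * um) := by ring
  have h20 : lam2 ≤ lam0 := by
    have : (1 - p) * up / (p * um) ≤ ((1 - p) / p) ^ 2 := by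
      have h4 : up / um ≤ (1 - p) / p := div_le_div₀ hq0.le hup_q hp0 hum_p
      calc (1 - p) * up / (p * um) = ((1 - p) / p) * (up / um) := by ring
        _ ≤ ((1 - p) / p) * ((1 - p) / p) := mul_le_mul_of_nonneg_left h4 hqp
        _ = ((1 - p) / p) ^ 2 := (sq _).symm
    calc lam2 ≤ Real.log (((1 - p) / p) ^ 2) := Real.log_le_log hc2 this
      _ = lam0 := by
          rw [sq, Real.log_mul (by positivity) (by positivity), hlam0_def, hL_def]; ring
  -- values of G and F at the tangency points
  have hG0 : ksG p K 0 = 0 := by rw [ksG, ksU_zero hp0]; ring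
  have hGlam0 : ksG p K lam0 = 0 := by
    rw [ksG, hu0, hlam0_def]
    linear_combination hK3
  have hF0 : ksF p K 0 = 0 := ksF_zero p K
  have hFlam0 : ksF p K lam0 = 0 := by
    rw [ksF, hD0, ← hL_def, hlam0_def]
    linear_combination L * hK3
  -- monotonicity of G on the three regions
  have hGmonoA : ∀ a b : ℝ, a ≤ b → b ≤ lam1 → ksG p K a ≤ ksG p K b := by
    intro a b hab hb
    apply ks_mono (fun y => ksG_deriv hp0 hp1 K y) hab
    intro y hy
    rw [hsign y]
    have h1 : ksU p y ≤ um := by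
      rw [← hu1]; exact ksU_mono hp0 hp1 (le_trans hy.2.le hb)
    calc (0:ℝ) ≤ (um - ksU p y) * (up - ksU p y) :=
          mul_nonneg (by linarith) (by linarith)
      _ = (ksU p y - um) * (ksU p y - up) := by ring
  have hGmonoB : ∀ a b : ℝ, lam2 ≤ a → a ≤ b → ksG p K a ≤ ksG p K b := by
    intro a b ha hab
    apply ks_mono (fun y => ksG_deriv hp0 hp1 K y) hab
    intro y hy
    rw [hsign y]
    have h1 : up ≤ ksU p y := by
      rw [← hu2]; exact ksU_mono hp0 hp1 (le_trans ha hy.1.le)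
    exact mul_nonneg (by linarith) (by linarith)
  have hGantiC : ∀ a b : ℝ, lam1 ≤ a → a ≤ b → b ≤ lam2 → ksG p K b ≤ ksG p K a := by
    intro a b ha hab hb
    apply ks_anti (fun y => ksG_deriv hp0 hp1 K y) hab
    intro y hy
    rw [hsign y]
    have h1 : um ≤ ksU p y := by
      rw [← hu1]; exact ksU_mono hp0 hp1 (le_trans ha hy.1.le)
    have h2 : ksU p y ≤ up := by
      rw [← hu2]; exact ksU_mono hp0 hp1 (le_trans hy.2.le hb)
    exact mul_nonpos_of_nonneg_of_nonpos (by linarith) (by linarith)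
  -- region A : y ≤ lam1
  have hA : ∀ y : ℝ, y ≤ lam1 → 0 ≤ ksF p K y := by
    intro y hy
    rcases le_total y 0 with h | h
    · have : ksF p K 0 ≤ ksF p K y := by
        apply ks_anti (fun t => ksF_deriv hp0 hp1 K t) h
        intro t ht
        have := hGmonoA t 0 ht.2.le h1nn
        rw [hG0] at this
        exact this
      linarith [hF0]
    · have : ksF p K 0 ≤ ksF p K y := by
        apply ks_mono (fun t => ksF_deriv hp0 hp1 K t) h
        intro t ht
        have := hGmonoA 0 t ht.1.le (le_trans ht.2.le hy)
        rw [hG0] at this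
        exact this
      linarith [hF0]
  -- region B : lam2 ≤ y
  have hB : ∀ y : ℝ, lam2 ≤ y → 0 ≤ ksF p K y := by
    intro y hy
    rcases le_total y lam0 with h | h
    · have : ksF p K lam0 ≤ ksF p K y := by
        apply ks_anti (fun t => ksF_deriv hp0 hp1 K t) h
        intro t ht
        have := hGmonoB t lam0 (le_trans hy ht.1.le) ht.2.le
        rw [hGlam0] at this
        exact this
      linarith [hFlam0]
    · have : ksF p K lam0 ≤ ksF p K y := by
        apply ks_mono (fun t => ksF_deriv hp0 hp1 K t) h
        intro t ht
        have := hGmonoB lam0 t h20 ht.1.le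
        rw [hGlam0] at this
        exact this
      linarith [hFlam0]
  -- assemble
  rcases le_total x lam1 with h | h
  · exact hA x h
  rcases le_total lam2 x with h' | h'
  · exact hB x h'
  rcases le_total 0 (ksG p K x) with hg | hg
  · have h1 : ksF p K lam1 ≤ ksF p K x := by
      apply ks_mono (fun t => ksF_deriv hp0 hp1 K t) h
      intro t ht
      have := hGantiC t x ht.1.le ht.2.le h'
      exact le_trans hg this
    exact le_trans (hA lam1 le_rfl) h1
  · have h1 : ksF p K lam2 ≤ ksF p K x := by
      apply ks_anti (fun t => ksF_deriv hp0 hp1 K t) h'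
      intro t ht
      have := hGantiC x t h ht.1.le ht.2.le
      exact le_trans this hg
    exact le_trans (hB lam2 le_rfl) h1
lemma ks_main {p K : ℝ} (hp0 : 0 < p) (hp2 : p ≤ 1 / 2)
    (hK1 : p * (1 - p) ≤ K) (hK2 : K ≤ 1 / 4)
    (hK3 : K * (2 * Real.log ((1 - p) / p)) = 1 - 2 * p) (lam : ℝ) :
    (1 - p) * Real.exp (-lam * p) + p * Real.exp (lam * (1 - p)) ≤
      Real.exp (lam ^ 2 * K / 2) := by
  have hp1 : p < 1 := by linarith
  have hpos := ksD_pos hp0 hp1 lam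
  have h := ks_key hp0 hp2 hK1 hK2 hK3 lam
  rw [ksF] at h
  have h2 : Real.log ((1 - p) + p * Real.exp lam) - p * lam ≤ lam ^ 2 * K / 2 := by linarith
  calc (1 - p) * Real.exp (-lam * p) + p * Real.exp (lam * (1 - p))
      = Real.exp (Real.log ((1 - p) + p * Real.exp lam) - p * lam) := by
        have a1 : Real.exp (-lam * p) = (Real.exp (p * lam))⁻¹ := by
          rw [← Real.exp_neg]; congr 1; ring
        have a2 : Real.exp (lam * (1 - p)) = Real.exp lam * (Real.exp (p * lam))⁻¹ := by
          rw [← Real.exp_neg, ← Real.exp_add]; congr 1; ring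
        rw [Real.exp_sub, Real.exp_log hpos, a1, a2, div_eq_mul_inv]
        ring
    _ ≤ Real.exp (lam ^ 2 * K / 2) := Real.exp_le_exp.2 h2

lemma ks_props {p : ℝ} (hp0 : 0 < p) (hplt : p < 1 / 2) :
    p * (1 - p) ≤ kearnsSaul p ∧ kearnsSaul p ≤ 1 / 4 ∧
      kearnsSaul p * (2 * Real.log ((1 - p) / p)) = 1 - 2 * p := by
  have hq0 : 0 < 1 - p := by linarith
  set L : ℝ := Real.log ((1 - p) / p) with hL_def
  have hr1 : 1 < (1 - p) / p := (one_lt_div hp0).2 (by linarith)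
  have hL0 : 0 < L := Real.log_pos hr1
  have hKval : kearnsSaul p = (1 - 2 * p) / (2 * L) := by
    rw [kearnsSaul, if_neg (by intro hc; rw [hc] at hplt; norm_num at hplt)]
    rw [show p / (1 - p) = ((1 - p) / p)⁻¹ by rw [inv_div], Real.log_inv, ← hL_def]
    ring
  have hexpL : Real.exp L = (1 - p) / p := Real.exp_log (by positivity)
  refine ⟨?_, ?_, ?_⟩
  · -- p(1-p) ≤ K  ⟺  2 p (1-p) L ≤ 1 - 2p, via L ≤ sinh L
    rw [hKval, le_div_iff₀ (by linarith)]
    have hs : L ≤ Real.sinh L := (Real.self_lt_sinh_iff.2 hL0).le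
    rw [Real.sinh_eq, hexpL, Real.exp_neg, hexpL] at hs
    have hinv : ((1 - p) / p)⁻¹ = p / (1 - p) := by rw [inv_div]
    rw [hinv] at hs
    have e1 : p * (1 - p) * ((1 - p) / p) = (1 - p) ^ 2 := by field_simp
    have e2 : p * (1 - p) * (p / (1 - p)) = p ^ 2 := by field_simp
    nlinarith [mul_le_mul_of_nonneg_left hs (le_of_lt (mul_pos hp0 hq0))]
  · -- K ≤ 1/4  ⟺  1 - 2p ≤ L/2, via sinh(L/2) ≤ (L/2) cosh(L/2)
    rw [hKval, div_le_iff₀ (by linarith)]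
    have hsc := ks_sinh_le (L / 2) (by linarith)
    rw [Real.sinh_eq, Real.cosh_eq] at hsc
    set E : ℝ := Real.exp (L / 2) with hE_def
    have hE0 : 0 < E := Real.exp_pos _
    have hEE : E * E = (1 - p) / p := by
      rw [hE_def, ← Real.exp_add, show L / 2 + L / 2 = L by ring, hexpL]
    have hEE' : E * Real.exp (-(L / 2)) = 1 := by
      rw [hE_def, ← Real.exp_add]; simp
    have hpE : p * (E * E) = 1 - p := by
      rw [hEE]; field_simp
    have e3 : p * (E * Real.exp (-(L / 2))) = p := by rw [hEE']; ring
    have h5 : p * E * (E - Real.exp (-(L / 2))) ≤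
        p * E * (L / 2 * (E + Real.exp (-(L / 2)))) :=
      mul_le_mul_of_nonneg_left (by linarith [hsc]) (by positivity)
    have eL : p * E * (E - Real.exp (-(L / 2))) = (1 - p) - p := by
      linear_combination hpE - e3
    have eR : p * E * (L / 2 * (E + Real.exp (-(L / 2)))) = L / 2 := by
      linear_combination (L / 2) * hpE + (L / 2) * e3
    rw [eL, eR] at h5
    linarith
  · rw [hKval]
    exact div_mul_cancel₀ (1 - 2 * p) (by positivity)

lemma kearnsSaul_symm {p : ℝ} (hne : p ≠ 1 / 2) (hne' : 1 - p ≠ 1 / 2) :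
    kearnsSaul (1 - p) = kearnsSaul p := by
  rw [kearnsSaul, kearnsSaul, if_neg hne', if_neg hne]
  rw [show (1 - p) / (1 - (1 - p)) = (p / (1 - p))⁻¹ by
    rw [inv_div, show 1 - (1 - p) = p from by ring], Real.log_inv]
  ring

/-- Kearns–Saul inequality.  For every `p ∈ (0, 1)` and every `lam : ℝ`,
`(1 - p) e^{-lam p} + p e^{lam (1 - p)} ≤ exp (lam² K(p) / 2)`. -/
theorem kearnsSaul_inequality (p : ℝ) (hp : p ∈ Set.Ioo (0 : ℝ) 1) (lam : ℝ) :
    (1 - p) * Real.exp (-lam * p) + p * Real.exp (lam * (1 - p)) ≤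
      Real.exp (lam ^ 2 * kearnsSaul p / 2) := by
  obtain ⟨hp0, hp1⟩ := hp
  rcases lt_trichotomy p (1 / 2) with h | h | h
  · obtain ⟨h1, h2, h3⟩ := ks_props hp0 h
    exact ks_main hp0 h.le h1 h2 h3 lam
  · subst h
    have hK : kearnsSaul (1 / 2) = 1 / 4 := by rw [kearnsSaul, if_pos rfl]
    rw [hK]
    have h3 : (1 / 4 : ℝ) * (2 * Real.log ((1 - 1 / 2) / (1 / 2))) = 1 - 2 * (1 / 2) := by
      norm_num
    exact ks_main (by norm_num) le_rfl (by norm_num) le_rfl h3 lam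
  · have hp0' : 0 < 1 - p := by linarith
    have h' : 1 - p < 1 / 2 := by linarith
    obtain ⟨h1, h2, h3⟩ := ks_props hp0' h'
    have hsymm : kearnsSaul (1 - p) = kearnsSaul p :=
      kearnsSaul_symm (by intro hc; rw [hc] at h; norm_num at h)
        (by intro hc; rw [show p = 1/2 by linarith] at h; norm_num at h)
    have hmain := ks_main hp0' h'.le h1 h2 h3 (-lam)
    rw [hsymm] at hmain
    ring_nf at hmain ⊢
    linarith [hmain]
end

section
/- Let (Ω, F, (F_t)_{t∈ℕ}, P) be a filtered probability space, (Y_t)_{t≥1} an adapted nonnegative integrable real-valued process, (Ŷ_t)_{t≥1} a predictable process with values in [0, 1], and λ ∈ [0, 1) fixed. Then 1 + λ(Y_s − Ŷ_s) ≥ 1 − λ > 0 almost surely for every s, and the process E_t(λ) = exp( λ Σ_{s≤t} (Ŷ_s − E[Y_s | F_{s−1}]) + Σ_{s≤t} log(1 + λ(Y_s − Ŷ_s)) ), with E_0(λ) = 1, is a nonnegative supermartingale; in particular E[E_t(λ)] ≤ 1 for all t. -/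
open MeasureTheory

lemma lintegral_mul_condexp_aux {Ω : Type*} {m m0 : MeasurableSpace Ω} (hm : m ≤ m0)
    (μ : Measure Ω) [IsFiniteMeasure μ] {f g : Ω → ℝ}
    (hf : StronglyMeasurable[m] f) (hf0 : ∀ ω, 0 ≤ f ω)
    (hg : Integrable g μ) (hg0 : ∀ ω, 0 ≤ g ω) :
    ∫⁻ ω, ENNReal.ofReal (f ω * g ω) ∂μ = ∫⁻ ω, ENNReal.ofReal (f ω * (μ[g|m]) ω) ∂μ := by
  set fn : ℕ → Ω → ℝ := fun n ω => min (f ω) n with hfn_def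
  have hfn_meas : ∀ n, StronglyMeasurable[m] (fn n) :=
    fun n => (hf.measurable.min measurable_const).stronglyMeasurable
  have hfn_nonneg : ∀ n ω, 0 ≤ fn n ω := fun n ω => le_min (hf0 ω) (n.cast_nonneg)
  have hfn_bdd : ∀ n ω, ‖fn n ω‖ ≤ (n : ℝ) := by
    intro n ω
    rw [Real.norm_eq_abs, abs_of_nonneg (hfn_nonneg n ω)]
    exact min_le_right _ _
  have hfn_mono : ∀ ω, Monotone fun n => fn n ω := by
    intro ω a b hab
    exact min_le_min le_rfl (Nat.cast_le.2 hab)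
  have hint : ∀ n, Integrable (fun ω => fn n ω * g ω) μ :=
    fun n => hg.bdd_mul ((hfn_meas n).mono hm).aestronglyMeasurable (Filter.Eventually.of_forall (hfn_bdd n))
  have hcond0 : 0 ≤ᵐ[μ] μ[g|m] := condExp_nonneg (Filter.Eventually.of_forall hg0)
  have hintc : ∀ n, Integrable (fun ω => fn n ω * (μ[g|m]) ω) μ :=
    fun n => integrable_condExp.bdd_mul ((hfn_meas n).mono hm).aestronglyMeasurable (Filter.Eventually.of_forall (hfn_bdd n))
  have hstep : ∀ n, ∫⁻ ω, ENNReal.ofReal (fn n ω * g ω) ∂μ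
      = ∫⁻ ω, ENNReal.ofReal (fn n ω * (μ[g|m]) ω) ∂μ := by
    intro n
    have h1 : ∫ ω, fn n ω * g ω ∂μ = ∫ ω, fn n ω * (μ[g|m]) ω ∂μ := by
      rw [← integral_condExp hm (f := fun ω => fn n ω * g ω)]
      exact integral_congr_ae (condExp_mul_of_stronglyMeasurable_left (hfn_meas n) (hint n) hg)
    rw [← ofReal_integral_eq_lintegral_ofReal (hint n)
        (Filter.Eventually.of_forall fun ω => mul_nonneg (hfn_nonneg n ω) (hg0 ω)),
      ← ofReal_integral_eq_lintegral_ofReal (hintc n)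
        (by filter_upwards [hcond0] with ω hω using mul_nonneg (hfn_nonneg n ω) hω), h1]
  have hsup : ∀ (h : Ω → ℝ) (ω : Ω), 0 ≤ h ω →
      (⨆ n, ENNReal.ofReal (fn n ω * h ω)) = ENNReal.ofReal (f ω * h ω) := by
    intro h ω hω
    apply le_antisymm
    · exact iSup_le fun n => ENNReal.ofReal_le_ofReal
        (mul_le_mul_of_nonneg_right (min_le_left _ _) hω)
    · refine le_iSup_of_le ⌈f ω⌉₊ (le_of_eq ?_)
      congr 1
      rw [hfn_def]
      simp only [min_eq_left (Nat.le_ceil (f ω))]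
  have hmct : ∀ (h : Ω → ℝ), AEStronglyMeasurable h μ → (0 ≤ᵐ[μ] h) →
      ∫⁻ ω, ENNReal.ofReal (f ω * h ω) ∂μ = ⨆ n, ∫⁻ ω, ENNReal.ofReal (fn n ω * h ω) ∂μ := by
    intro h hhm hh0
    have hmono : ∀ᵐ ω ∂μ, Monotone fun n => ENNReal.ofReal (fn n ω * h ω) := by
      refine Filter.Eventually.of_forall fun ω a b hab => ?_
      rcases le_or_gt 0 (h ω) with h0 | h0
      · exact ENNReal.ofReal_le_ofReal (mul_le_mul_of_nonneg_right (hfn_mono ω hab) h0)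
      · have : ∀ n, fn n ω * h ω ≤ 0 := fun n => mul_nonpos_of_nonneg_of_nonpos
          (hfn_nonneg n ω) h0.le
        simp [ENNReal.ofReal_of_nonpos (this a), ENNReal.ofReal_of_nonpos (this b)]
    have hMCT := lintegral_iSup' (μ := μ)
      (f := fun n ω => ENNReal.ofReal (fn n ω * h ω))
      (fun n => ((((hfn_meas n).mono hm).aestronglyMeasurable.mul
        hhm).aemeasurable).ennreal_ofReal) hmono
    rw [← hMCT]
    refine lintegral_congr_ae ?_
    filter_upwards [hh0] with ω hω
    exact (hsup h ω hω).symm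
  rw [hmct g (hg.aestronglyMeasurable) (Filter.Eventually.of_forall hg0),
    hmct (μ[g|m]) (stronglyMeasurable_condExp.mono hm).aestronglyMeasurable hcond0]
  exact iSup_congr hstep

/-- the importance-weighted test supermartingale.  For an adapted
nonnegative integrable process `Y`, a predictable `[0,1]`-valued process `Ŷ`, and a fixed
bet `lam ∈ [0, 1)`, one has `1 + lam (Y_s - Ŷ_s) ≥ 1 - lam > 0`, and the process
`E_t = exp (lam ∑_{s ≤ t} (Ŷ_s - E[Y_s | ℱ_{s-1}]) + ∑_{s ≤ t} log (1 + lam (Y_s - Ŷ_s)))`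
(with `E 0 = 1`) is a nonnegative supermartingale; in particular `E[E_t] ≤ 1` for all `t`. -/
theorem iw_test_supermartingale {Ω : Type*} {m0 : MeasurableSpace Ω} (μ : Measure Ω)
    [IsProbabilityMeasure μ] (ℱ : Filtration ℕ m0)
    (Y : ℕ → Ω → ℝ) (hYadapted : Adapted ℱ Y) (hYnonneg : ∀ s ω, 0 ≤ Y s ω)
    (hYint : ∀ s, Integrable (Y s) μ)
    (Yhat : ℕ → Ω → ℝ) (hYhat01 : ∀ s ω, Yhat s ω ∈ Set.Icc (0 : ℝ) 1)
    (hYhatpred : ∀ s, StronglyMeasurable[ℱ (s - 1)] (Yhat s))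
    (lam : ℝ) (hlam : lam ∈ Set.Ico (0 : ℝ) 1)
    (E : ℕ → Ω → ℝ)
    (hE : ∀ t ω, E t ω =
      Real.exp (lam * ∑ s ∈ Finset.Icc 1 t, (Yhat s ω - (μ[Y s | ℱ (s - 1)]) ω) +
        ∑ s ∈ Finset.Icc 1 t, Real.log (1 + lam * (Y s ω - Yhat s ω)))) :
    (0 < 1 - lam) ∧
    (∀ s ω, 1 - lam ≤ 1 + lam * (Y s ω - Yhat s ω)) ∧
    (∀ t ω, 0 ≤ E t ω) ∧ (∀ ω, E 0 ω = 1) ∧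
    Supermartingale E ℱ μ ∧
    (∀ t, ∫ ω, E t ω ∂μ ≤ 1) := by
  obtain ⟨hl0, hl1⟩ := hlam
  have h1 : 0 < 1 - lam := by linarith
  have hZle : ∀ s ω, 1 - lam ≤ 1 + lam * (Y s ω - Yhat s ω) := by
    intro s ω
    have hy := hYnonneg s ω
    have h2 := (hYhat01 s ω).2
    nlinarith
  have hZpos : ∀ s ω, 0 < 1 + lam * (Y s ω - Yhat s ω) :=
    fun s ω => lt_of_lt_of_le h1 (hZle s ω)
  have hEnn : ∀ t ω, 0 ≤ E t ω := fun t ω => by rw [hE]; exact (Real.exp_pos _).le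
  have hE0 : ∀ ω, E 0 ω = 1 := fun ω => by simp [hE]
  -- notation
  set Z : ℕ → Ω → ℝ := fun s ω => 1 + lam * (Y s ω - Yhat s ω) with hZdef
  set G : ℕ → Ω → ℝ :=
    fun t ω => Real.exp (lam * (Yhat (t + 1) ω - (μ[Y (t + 1) | ℱ t]) ω)) with hGdef
  -- integrability of Yhat and Z
  have hYhatint : ∀ s, Integrable (Yhat s) μ := by
    intro s
    refine Integrable.mono' (integrable_const (1 : ℝ))
      (((hYhatpred s).mono (ℱ.le _)).aestronglyMeasurable)
      (Filter.Eventually.of_forall fun ω => ?_)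
    rw [Real.norm_eq_abs, abs_of_nonneg (hYhat01 s ω).1]
    exact (hYhat01 s ω).2
  have hZint : ∀ s, Integrable (Z s) μ := fun s =>
    (integrable_const (1 : ℝ)).add (((hYint s).sub (hYhatint s)).const_mul lam)
  -- product decomposition
  have hprod : ∀ t ω, E (t + 1) ω = (E t ω * G t ω) * Z (t + 1) ω := by
    intro t ω
    have hlog : Real.exp (Real.log (1 + lam * (Y (t + 1) ω - Yhat (t + 1) ω)))
        = 1 + lam * (Y (t + 1) ω - Yhat (t + 1) ω) := Real.exp_log (hZpos _ ω)
    rw [hE, hE, ← Finset.insert_Icc_right_eq_Icc_add_one (Nat.le_add_left 1 t),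
      Finset.sum_insert (by simp), Finset.sum_insert (by simp), hGdef, hZdef]
    simp only [Nat.add_sub_cancel]
    conv_rhs => rw [← hlog, ← Real.exp_add, ← Real.exp_add]
    exact congrArg Real.exp (by ring)
  -- adaptedness
  have hadp : ∀ t, StronglyMeasurable[ℱ t] (E t) := by
    intro t
    have hfun : E t = fun ω =>
        Real.exp (lam * ∑ s ∈ Finset.Icc 1 t, (Yhat s ω - (μ[Y s | ℱ (s - 1)]) ω) +
          ∑ s ∈ Finset.Icc 1 t, Real.log (1 + lam * (Y s ω - Yhat s ω))) := funext (hE t)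
    rw [hfun]
    refine Measurable.stronglyMeasurable ?_
    have hle1 : ∀ s, s ∈ Finset.Icc 1 t → ℱ (s - 1) ≤ ℱ t :=
      fun s hs => ℱ.mono (le_trans (Nat.sub_le s 1) (Finset.mem_Icc.1 hs).2)
    have hle2 : ∀ s, s ∈ Finset.Icc 1 t → ℱ s ≤ ℱ t :=
      fun s hs => ℱ.mono (Finset.mem_Icc.1 hs).2
    have hsum1 : Measurable[ℱ t]
        fun ω => ∑ s ∈ Finset.Icc 1 t, (Yhat s ω - (μ[Y s | ℱ (s - 1)]) ω) := by
      refine Finset.measurable_sum _ fun s hs => Measurable.sub ?_ ?_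
      · exact ((hYhatpred s).mono (hle1 s hs)).measurable
      · exact (stronglyMeasurable_condExp.mono (hle1 s hs)).measurable
    have hsum2 : Measurable[ℱ t]
        fun ω => ∑ s ∈ Finset.Icc 1 t, Real.log (1 + lam * (Y s ω - Yhat s ω)) := by
      refine Finset.measurable_sum _ fun s hs => Real.measurable_log.comp ?_
      exact measurable_const.add
        ((((hYadapted s).mono (hle2 s hs) le_rfl).sub
          ((hYhatpred s).mono (hle1 s hs)).measurable).const_mul lam)
    exact Real.measurable_exp.comp ((hsum1.const_mul lam).add hsum2)
  have hGSM : ∀ t, StronglyMeasurable[ℱ t] (G t) := by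
    intro t
    refine Measurable.stronglyMeasurable (Real.measurable_exp.comp ?_)
    exact (((hYhatpred (t + 1)).measurable.sub
      stronglyMeasurable_condExp.measurable).const_mul lam)
  -- conditional expectation of Z
  have hce : ∀ t, μ[Z (t + 1) | ℱ t] =ᵐ[μ]
      fun ω => 1 + lam * ((μ[Y (t + 1) | ℱ t]) ω - Yhat (t + 1) ω) := by
    intro t
    have hdecomp : Z (t + 1) = (fun _ => (1 : ℝ)) +
        (lam • (Y (t + 1) - Yhat (t + 1))) := by
      funext ω; simp [hZdef, smul_eq_mul]
    rw [hdecomp]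
    refine (condExp_add (integrable_const 1)
      (((hYint (t + 1)).sub (hYhatint (t + 1))).smul lam) (ℱ t)).trans ?_
    have h2 := condExp_smul (μ := μ) (m := ℱ t) lam (Y (t + 1) - Yhat (t + 1))
    have h3 := condExp_sub (μ := μ) (m := ℱ t) (hYint (t + 1)) (hYhatint (t + 1))
    have h4 : μ[Yhat (t + 1) | ℱ t] = Yhat (t + 1) :=
      condExp_of_stronglyMeasurable (ℱ.le t) (hYhatpred (t + 1)) (hYhatint (t + 1))
    filter_upwards [h2, h3] with ω hω2 hω3
    simp only [Pi.add_apply, Pi.smul_apply, condExp_const (ℱ.le t), hω2, smul_eq_mul]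
    rw [hω3]
    simp [h4]
  -- key a.e. inequality
  have hae : ∀ t, ∀ᵐ ω ∂μ,
      (E t ω * G t ω) * (μ[Z (t + 1) | ℱ t]) ω ≤ E t ω := by
    intro t
    filter_upwards [hce t] with ω hω
    rw [hω]
    set c := (μ[Y (t + 1) | ℱ t]) ω
    set d := Yhat (t + 1) ω
    have hexp : 1 + lam * (c - d) ≤ Real.exp (lam * (c - d)) := by
      have := Real.add_one_le_exp (lam * (c - d)); linarith
    have hGc : G t ω * (1 + lam * (c - d)) ≤ 1 := by
      calc G t ω * (1 + lam * (c - d)) ≤ G t ω * Real.exp (lam * (c - d)) :=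
            mul_le_mul_of_nonneg_left hexp (Real.exp_pos _).le
        _ = 1 := by
            rw [hGdef, ← Real.exp_add,
              show lam * (d - c) + lam * (c - d) = 0 from by ring, Real.exp_zero]
    calc E t ω * G t ω * (1 + lam * (c - d)) = E t ω * (G t ω * (1 + lam * (c - d))) := by ring
      _ ≤ E t ω * 1 := mul_le_mul_of_nonneg_left hGc (hEnn t ω)
      _ = E t ω := mul_one _
  -- induction: integrability and lintegral bound
  have hmain : ∀ t, Integrable (E t) μ ∧ ∫⁻ ω, ENNReal.ofReal (E t ω) ∂μ ≤ 1 := by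
    intro t
    induction t with
    | zero =>
      have hfun : E 0 = fun _ => (1 : ℝ) := funext hE0
      rw [hfun]
      exact ⟨integrable_const 1, by simp⟩
    | succ t ih =>
      obtain ⟨hInt, hle⟩ := ih
      have hfSM : StronglyMeasurable[ℱ t] fun ω => E t ω * G t ω := (hadp t).mul (hGSM t)
      have hf0 : ∀ ω, 0 ≤ E t ω * G t ω :=
        fun ω => mul_nonneg (hEnn t ω) (Real.exp_pos _).le
      have hg0 : ∀ ω, 0 ≤ Z (t + 1) ω := fun ω => (hZpos (t + 1) ω).le
      have hkey : ∫⁻ ω, ENNReal.ofReal (E (t + 1) ω) ∂μ ≤ 1 := by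
        calc ∫⁻ ω, ENNReal.ofReal (E (t + 1) ω) ∂μ
            = ∫⁻ ω, ENNReal.ofReal ((E t ω * G t ω) * Z (t + 1) ω) ∂μ :=
              lintegral_congr fun ω => by rw [hprod t ω]
          _ = ∫⁻ ω, ENNReal.ofReal ((E t ω * G t ω) * (μ[Z (t + 1) | ℱ t]) ω) ∂μ :=
              lintegral_mul_condexp_aux (ℱ.le t) μ hfSM hf0 (hZint (t + 1)) hg0
          _ ≤ ∫⁻ ω, ENNReal.ofReal (E t ω) ∂μ := by
              refine lintegral_mono_ae ?_
              filter_upwards [hae t] with ω hω using ENNReal.ofReal_le_ofReal hω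
          _ ≤ 1 := hle
      refine ⟨⟨((hadp (t + 1)).mono (ℱ.le (t + 1))).aestronglyMeasurable, ?_⟩, hkey⟩
      rw [hasFiniteIntegral_iff_ofReal (Filter.Eventually.of_forall (hEnn (t + 1)))]
      exact lt_of_le_of_lt hkey ENNReal.one_lt_top
  -- conditional supermartingale step
  have hcond : ∀ t, μ[E (t + 1) | ℱ t] ≤ᵐ[μ] E t := by
    intro t
    have heq : E (t + 1) = fun ω => (fun ω => E t ω * G t ω) ω * Z (t + 1) ω :=
      funext fun ω => hprod t ω
    have hfg : Integrable ((fun ω => E t ω * G t ω) * Z (t + 1)) μ := by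
      have := (hmain (t + 1)).1
      rw [heq] at this
      exact this
    have hmul := condExp_mul_of_stronglyMeasurable_left ((hadp t).mul (hGSM t)) hfg (hZint (t + 1))
    have hcongr : μ[E (t + 1) | ℱ t] =ᵐ[μ] μ[(fun ω => E t ω * G t ω) * Z (t + 1) | ℱ t] := by
      rw [heq]; rfl
    have hfin : μ[E (t + 1) | ℱ t] =ᵐ[μ]
        (fun ω => E t ω * G t ω) * μ[Z (t + 1) | ℱ t] := hcongr.trans hmul
    refine hfin.le.trans ?_
    filter_upwards [hae t] with ω hω
    simpa using hω
  have hsuper : Supermartingale E ℱ μ :=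
    supermartingale_nat (fun t => hadp t) (fun t => (hmain t).1) hcond
  refine ⟨h1, hZle, hEnn, hE0, hsuper, fun t => ?_⟩
  rw [integral_eq_lintegral_of_nonneg_ae (Filter.Eventually.of_forall (hEnn t))
    (hmain t).1.aestronglyMeasurable]
  refine ENNReal.toReal_le_of_le_ofReal zero_le_one ?_
  rw [ENNReal.ofReal_one]
  exact (hmain t).2
end
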